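/- Let u, c, d, v, w be points on the unit circle occurring in this cyclic order, with the line through u and v parallel to the line through c and d (equivalently uv = cd) and c + d ≠ 0. Set m := (c+d)/|c+d|, a := LIS[u,v,c,w], b := LIS[u,v,d,w] and p := LIS[u,v,w,m]. Then p is the Hilbert midpoint of a and b and also their hyperbolic midpoint: (|u−p|·|a−v|)/(|u−a|·|p−v|) = (|u−b|·|p−v|)/(|u−p|·|b−v|) (i.e. h(a,p) = h(p,b)), and ρ(a,p) = ρ(p,b), where ρ(x,y) = 2·arsinh(|x−y|/√((1−|x|²)(1−|y|²))). -/

import Mathlib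

open Complex

lemma conj_ne_zero' {z : ℂ} (h : z ≠ 0) : (starRingEnd ℂ) z ≠ 0 := by
  intro h'
  apply h
  simpa using congrArg (starRingEnd ℂ) h'

lemma lis_conj (u v s q : ℂ) (hu : u ≠ 0) (hv : v ≠ 0) (hs : s ≠ 0) (hq : q ≠ 0)
    (hcu : (starRingEnd ℂ) u = u⁻¹) (hcv : (starRingEnd ℂ) v = v⁻¹)
    (hcs : (starRingEnd ℂ) s = s⁻¹) (hcq : (starRingEnd ℂ) q = q⁻¹)
    (hden : u * v - s * q ≠ 0) :
    (starRingEnd ℂ) ((u * v * (s + q) - s * q * (u + v)) / (u * v - s * q))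
      = (u + v - s - q) / (u * v - s * q) := by
  have hden' : (starRingEnd ℂ) (u * v - s * q) ≠ 0 := conj_ne_zero' hden
  rw [map_div₀]
  rw [div_eq_div_iff hden' hden]
  simp only [map_sub, map_mul, map_add, hcu, hcv, hcs, hcq]
  field_simp
  ring

lemma one_sub_sq (u v s q : ℂ) (hu : u ≠ 0) (hv : v ≠ 0) (hs : s ≠ 0) (hq : q ≠ 0)
    (hcu : (starRingEnd ℂ) u = u⁻¹) (hcv : (starRingEnd ℂ) v = v⁻¹)
    (hcs : (starRingEnd ℂ) s = s⁻¹) (hcq : (starRingEnd ℂ) q = q⁻¹)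
    (hden : u * v - s * q ≠ 0) :
    ((1 - (‖(u * v * (s + q) - s * q * (u + v)) / (u * v - s * q)‖)^2 : ℝ) : ℂ)
      = (u - s) * (u - q) * ((v - s) * (v - q)) / (u * v - s * q)^2 := by
  set A : ℂ := (u * v * (s + q) - s * q * (u + v)) / (u * v - s * q) with hA
  have h1 : ((1 - (‖A‖)^2 : ℝ) : ℂ) = 1 - A * (starRingEnd ℂ) A := by
    rw [Complex.mul_conj, ← Complex.sq_norm]
    push_cast
    ring
  rw [h1, lis_conj u v s q hu hv hs hq hcu hcv hcs hcq hden, hA]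
  field_simp
  ring

/-- The hyperbolic distance of the unit disk. -/
noncomputable def hypDist (x y : ℂ) : ℝ :=
  2 * Real.arsinh (‖x - y‖ /
    Real.sqrt ((1 - (‖x‖)^2) * (1 - (‖y‖)^2)))


set_option maxHeartbeats 1000000 in
theorem core (u v c d w m : ℂ)
    (hu : ‖u‖ = 1) (hv : ‖v‖ = 1) (hc : ‖c‖ = 1)
    (hd : ‖d‖ = 1) (hw : ‖w‖ = 1) (hm : ‖m‖ = 1)
    (hcd : u * v = c * d) (hm2 : m ^ 2 = u * v)
    (huv : u ≠ v) (huc : u ≠ c) (hud : u ≠ d) (huw : u ≠ w)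
    (hvc : v ≠ c) (hvd : v ≠ d) (hvw : v ≠ w) (hcw : c ≠ w) (hdw : d ≠ w)
    (hA : (0:ℝ) < 1 - (‖(u*v*(c+w) - c*w*(u+v)) / (u*v - c*w)‖)^2)
    (hB : (0:ℝ) < 1 - (‖(u*v*(d+w) - d*w*(u+v)) / (u*v - d*w)‖)^2) :
    (‖u - (u*v*(w+m) - w*m*(u+v))/(u*v - w*m)‖ *
        ‖(u*v*(c+w) - c*w*(u+v))/(u*v - c*w) - v‖) /
      (‖u - (u*v*(c+w) - c*w*(u+v))/(u*v - c*w)‖ *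
        ‖(u*v*(w+m) - w*m*(u+v))/(u*v - w*m) - v‖) =
    (‖u - (u*v*(d+w) - d*w*(u+v))/(u*v - d*w)‖ *
        ‖(u*v*(w+m) - w*m*(u+v))/(u*v - w*m) - v‖) /
      (‖u - (u*v*(w+m) - w*m*(u+v))/(u*v - w*m)‖ *
        ‖(u*v*(d+w) - d*w*(u+v))/(u*v - d*w) - v‖) ∧
    hypDist ((u*v*(c+w) - c*w*(u+v))/(u*v - c*w)) ((u*v*(w+m) - w*m*(u+v))/(u*v - w*m)) =
    hypDist ((u*v*(w+m) - w*m*(u+v))/(u*v - w*m)) ((u*v*(d+w) - d*w*(u+v))/(u*v - d*w)) := by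
  have hu0 : u ≠ 0 := by intro h; rw [h] at hu; simp at hu
  have hv0 : v ≠ 0 := by intro h; rw [h] at hv; simp at hv
  have hc0 : c ≠ 0 := by intro h; rw [h] at hc; simp at hc
  have hd0 : d ≠ 0 := by intro h; rw [h] at hd; simp at hd
  have hw0 : w ≠ 0 := by intro h; rw [h] at hw; simp at hw
  have hm0 : m ≠ 0 := by intro h; rw [h] at hm; simp at hm
  have conj_inv : ∀ z : ℂ, ‖z‖ = 1 → (starRingEnd ℂ) z = z⁻¹ := by
    intro z hz
    have hz0 : z ≠ 0 := by intro h; rw [h] at hz; simp at hz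
    field_simp
    rw [mul_comm, Complex.mul_conj, Complex.normSq_eq_norm_sq, hz]
    norm_num
  have hcu := conj_inv u hu
  have hcv := conj_inv v hv
  have hcc := conj_inv c hc
  have hcd2 := conj_inv d hd
  have hcw2 := conj_inv w hw
  have hcm := conj_inv m hm
  have hKc : u * v - c * w ≠ 0 := by
    intro h
    apply hdw
    have h2 : c * d = c * w := by rw [← hcd]; linear_combination h
    exact mul_left_cancel₀ hc0 h2
  have hKd : u * v - d * w ≠ 0 := by
    intro h
    apply hcw
    have h2 : d * c = d * w := by rw [mul_comm d c, ← hcd]; linear_combination h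
    exact mul_left_cancel₀ hd0 h2
  set a : ℂ := (u*v*(c+w) - c*w*(u+v))/(u*v - c*w) with ha
  set b : ℂ := (u*v*(d+w) - d*w*(u+v))/(u*v - d*w) with hb
  set p : ℂ := (u*v*(w+m) - w*m*(u+v))/(u*v - w*m) with hp
  by_cases hdeg : u * v - w * m = 0
  · -- degenerate case: m = w and p = 0
    have hmw : m = w := by
      have h1 : m * (m - w) = 0 := by linear_combination hm2 + hdeg
      rcases mul_eq_zero.1 h1 with h | h
      · exact absurd h hm0
      · linear_combination h
    have hw2 : w ^ 2 = u * v := by rw [← hm2, hmw]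
    have hp0 : p = 0 := by rw [hp, hdeg, div_zero]
    have hca : (starRingEnd ℂ) a = (u + v - c - w) / (u * v - c * w) := by
      rw [ha]
      exact lis_conj u v c w hu0 hv0 hc0 hw0 hcu hcv hcc hcw2 hKc
    have hab : b = u * v * (starRingEnd ℂ) a := by
      rw [hb, hca, mul_div_assoc' (u*v) _ _, div_eq_div_iff hKd hKc]
      linear_combination (-(u*v*c + u*v*d - u*c*d - v*c*d))*hw2 + (-(u^2*v + u*v^2 - 2*u*v*w))*hcd
    have habs_b : ‖b‖ = ‖a‖ := by
      rw [hab, norm_mul, norm_mul, hu, hv, one_mul, one_mul, Complex.norm_conj]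
    have hub : ‖u - b‖ = ‖a - v‖ := by
      have h1 : u - b = u * v * (starRingEnd ℂ) (v - a) := by
        rw [hab, map_sub, hcv]
        field_simp
      rw [h1, norm_mul, norm_mul, hu, hv, one_mul, one_mul, Complex.norm_conj,
        norm_sub_rev]
    have hbv : ‖b - v‖ = ‖u - a‖ := by
      have h1 : b - v = u * v * (starRingEnd ℂ) (a - u) := by
        rw [hab, map_sub, hcu]
        field_simp
      rw [h1, norm_mul, norm_mul, hu, hv, one_mul, one_mul, Complex.norm_conj,
        norm_sub_rev]
    constructor
    · rw [hp0, sub_zero, norm_sub_rev 0 v, sub_zero, hu, hv, hub, hbv]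
      ring
    · rw [hp0, hypDist, hypDist, sub_zero, norm_sub_rev 0 b, sub_zero,
        habs_b, norm_zero]
      norm_num [mul_comm]
  · -- nondegenerate case
    have hKm : u * v - w * m ≠ 0 := hdeg
    have hum : u ≠ m := by
      intro h
      apply huv
      have h2 : u * u = u * v := by rw [← hm2, ← h]; ring
      exact mul_left_cancel₀ hu0 h2
    have hvm : v ≠ m := by
      intro h
      apply huv
      have h2 : v * u = v * v := by
        have : v ^ 2 = u * v := by rw [← hm2, ← h]
        linear_combination (-1) * this
      exact mul_left_cancel₀ hv0 h2
    -- difference nonzero facts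
    have nuv := sub_ne_zero_of_ne huv
    have nuc := sub_ne_zero_of_ne huc
    have nud := sub_ne_zero_of_ne hud
    have nuw := sub_ne_zero_of_ne huw
    have nvc := sub_ne_zero_of_ne hvc
    have nvd := sub_ne_zero_of_ne hvd
    have nvw := sub_ne_zero_of_ne hvw
    have num := sub_ne_zero_of_ne hum
    have nvm := sub_ne_zero_of_ne hvm
    -- abs of denominators
    have pUC := (norm_pos_iff.2 nuc).ne'
    have pUD := (norm_pos_iff.2 nud).ne'
    have pUW := (norm_pos_iff.2 nuw).ne'
    have pVC := (norm_pos_iff.2 nvc).ne'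
    have pVD := (norm_pos_iff.2 nvd).ne'
    have pVW := (norm_pos_iff.2 nvw).ne'
    have pUM := (norm_pos_iff.2 num).ne'
    have pVM := (norm_pos_iff.2 nvm).ne'
    have K1pos : 0 < ‖u*v - c*w‖ := norm_pos_iff.2 hKc
    have K2pos : 0 < ‖u*v - d*w‖ := norm_pos_iff.2 hKd
    have Kpos : 0 < ‖u*v - w*m‖ := norm_pos_iff.2 hKm
    -- abs formulas for the six segments
    have hUAa : ‖u - a‖ =
        ‖u-c‖ * ‖u-w‖ / ‖u*v - c*w‖ := by
      have h1 : u - a = v*((u-c)*(u-w))/(u*v - c*w) := by rw [ha]; field_simp; ring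
      rw [h1, norm_div, norm_mul, norm_mul, hv, one_mul]
    have hAVa : ‖a - v‖ =
        ‖v-c‖ * ‖v-w‖ / ‖u*v - c*w‖ := by
      have h1 : a - v = u*((v-c)*(v-w))/(u*v - c*w) * (-1) := by rw [ha]; field_simp; ring
      rw [h1, norm_mul, norm_div, norm_mul, norm_mul, hu, one_mul]
      simp
    have hUBa : ‖u - b‖ =
        ‖u-d‖ * ‖u-w‖ / ‖u*v - d*w‖ := by
      have h1 : u - b = v*((u-d)*(u-w))/(u*v - d*w) := by rw [hb]; field_simp; ring
      rw [h1, norm_div, norm_mul, norm_mul, hv, one_mul]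
    have hBVa : ‖b - v‖ =
        ‖v-d‖ * ‖v-w‖ / ‖u*v - d*w‖ := by
      have h1 : b - v = u*((v-d)*(v-w))/(u*v - d*w) * (-1) := by rw [hb]; field_simp; ring
      rw [h1, norm_mul, norm_div, norm_mul, norm_mul, hu, one_mul]
      simp
    have hUPa : ‖u - p‖ =
        ‖u-w‖ * ‖u-m‖ / ‖u*v - w*m‖ := by
      have h1 : u - p = v*((u-w)*(u-m))/(u*v - w*m) := by rw [hp]; field_simp; ring
      rw [h1, norm_div, norm_mul, norm_mul, hv, one_mul]
    have hPVa : ‖p - v‖ =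
        ‖v-w‖ * ‖v-m‖ / ‖u*v - w*m‖ := by
      have h1 : p - v = u*((v-w)*(v-m))/(u*v - w*m) * (-1) := by rw [hp]; field_simp; ring
      rw [h1, norm_mul, norm_div, norm_mul, norm_mul, hu, one_mul]
      simp
    -- the key complex identity
    have hE : (u-m)^2*((v-c)*(v-d)) = (u-c)*(u-d)*(v-m)^2 := by
      linear_combination (-u^2 + u*c + u*d + v^2 - v*c - v*d) * hm2
        + (-u^2 + 2*u*m + v^2 - 2*v*m) * hcd
    have hE' : (‖u-m‖)^2 * (‖v-c‖ * ‖v-d‖)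
        = ‖u-c‖ * ‖u-d‖ * (‖v-m‖)^2 := by
      have h2 := congrArg (fun z : ℂ => ‖z‖) hE
      simpa [norm_mul, norm_pow] using h2
    constructor
    · -- Hilbert part
      have hBne : ‖u - a‖ * ‖p - v‖ ≠ 0 := by
        rw [hUAa, hPVa]
        exact mul_ne_zero (div_ne_zero (mul_ne_zero pUC pUW) K1pos.ne')
          (div_ne_zero (mul_ne_zero pVW pVM) Kpos.ne')
      have hDne : ‖u - p‖ * ‖b - v‖ ≠ 0 := by
        rw [hUPa, hBVa]
        exact mul_ne_zero (div_ne_zero (mul_ne_zero pUW pUM) Kpos.ne')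
          (div_ne_zero (mul_ne_zero pVD pVW) K2pos.ne')
      rw [div_eq_div_iff hBne hDne]
      rw [hUAa, hAVa, hUBa, hBVa, hUPa, hPVa]
      rw [div_mul_div_comm, div_mul_div_comm, div_mul_div_comm, div_mul_div_comm]
      rw [div_mul_div_comm, div_mul_div_comm]
      rw [div_eq_div_iff
        (mul_ne_zero (mul_ne_zero Kpos.ne' K1pos.ne') (mul_ne_zero Kpos.ne' K2pos.ne'))
        (mul_ne_zero (mul_ne_zero K2pos.ne' Kpos.ne') (mul_ne_zero K1pos.ne' Kpos.ne'))]
      linear_combination ((‖u-w‖)^2 * (‖v-w‖)^2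
        * (‖u*v-c*w‖) * (‖u*v-d*w‖) * (‖u*v-w*m‖)^2) * hE'
    · -- hyperbolic part
      have hA'C := one_sub_sq u v c w hu0 hv0 hc0 hw0 hcu hcv hcc hcw2 hKc
      have hB'C := one_sub_sq u v d w hu0 hv0 hd0 hw0 hcu hcv hcd2 hcw2 hKd
      have hP'C := one_sub_sq u v w m hu0 hv0 hw0 hm0 hcu hcv hcw2 hcm hKm
      rw [← ha] at hA'C
      rw [← hb] at hB'C
      rw [← hp] at hP'C
      have hapC : a - p = u*v*((c-m)*((u-w)*(v-w)))/((u*v-c*w)*(u*v-w*m)) := by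
        rw [ha, hp]; field_simp; ring
      have hpbC : p - b = u*v*((m-d)*((u-w)*(v-w)))/((u*v-w*m)*(u*v-d*w)) := by
        rw [hp, hb, div_sub_div _ _ hKm hKd]; ring
      have hcaA : (starRingEnd ℂ) a = (u+v-c-w)/(u*v-c*w) := by
        rw [ha]; exact lis_conj u v c w hu0 hv0 hc0 hw0 hcu hcv hcc hcw2 hKc
      have hcaB : (starRingEnd ℂ) b = (u+v-d-w)/(u*v-d*w) := by
        rw [hb]; exact lis_conj u v d w hu0 hv0 hd0 hw0 hcu hcv hcd2 hcw2 hKd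
      have hcaP : (starRingEnd ℂ) p = (u+v-w-m)/(u*v-w*m) := by
        rw [hp]; exact lis_conj u v w m hu0 hv0 hw0 hm0 hcu hcv hcw2 hcm hKm
      have hNap : ((‖a-p‖ : ℝ) : ℂ)^2
          = -(u*v*((c-m)^2*((u-w)^2*(v-w)^2)))/((u*v-c*w)^2*(u*v-w*m)^2) := by
        have h1 : ((‖a-p‖ : ℝ) : ℂ)^2 = (a-p) * (starRingEnd ℂ) (a-p) := by
          rw [Complex.mul_conj, ← Complex.sq_norm]; push_cast; ring
        rw [h1, map_sub, hcaA, hcaP, hapC]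
        rw [div_sub_div _ _ hKc hKm, div_mul_div_comm]
        ring
      have hNpb : ((‖p-b‖ : ℝ) : ℂ)^2
          = -(u*v*((m-d)^2*((u-w)^2*(v-w)^2)))/((u*v-w*m)^2*(u*v-d*w)^2) := by
        have h1 : ((‖p-b‖ : ℝ) : ℂ)^2 = (p-b) * (starRingEnd ℂ) (p-b) := by
          rw [Complex.mul_conj, ← Complex.sq_norm]; push_cast; ring
        rw [h1, map_sub, hcaP, hcaB, hpbC]
        rw [div_sub_div _ _ hKm hKd, div_mul_div_comm]
        ring
      have hE2 : (c-m)^2*((u-d)*(v-d)) = (m-d)^2*((u-c)*(v-c)) := by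
        linear_combination (u*c - u*d + v*c - v*d - c^2 + d^2) * hm2
          + (u*c - u*d + v*c - v*d - 2*c*m + 2*d*m) * hcd
      have KEY : (‖a-p‖)^2 * ((1 - (‖p‖)^2) * (1 - (‖b‖)^2))
          = (‖p-b‖)^2 * ((1 - (‖a‖)^2) * (1 - (‖p‖)^2)) := by
        apply Complex.ofReal_injective
        rw [Complex.ofReal_mul, Complex.ofReal_mul, Complex.ofReal_mul, Complex.ofReal_mul,
          Complex.ofReal_pow, Complex.ofReal_pow]
        rw [hNap, hNpb, hA'C, hB'C, hP'C]
        rw [div_mul_div_comm, div_mul_div_comm, div_mul_div_comm, div_mul_div_comm]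
        rw [mul_comm ((u*v-w*m)^2*(u*v-d*w)^2) ((u*v-c*w)^2*(u*v-w*m)^2)]
        have hN : -(u*v*((c-m)^2*((u-w)^2*(v-w)^2)))
              * ((u-w)*(u-m)*((v-w)*(v-m)) * ((u-d)*(u-w)*((v-d)*(v-w))))
            = -(u*v*((m-d)^2*((u-w)^2*(v-w)^2)))
              * ((u-c)*(u-w)*((v-c)*(v-w)) * ((u-w)*(u-m)*((v-w)*(v-m)))) := by
          linear_combination (-(u*v*(u-w)^4*(v-w)^4*(u-m)*(v-m))) * hE2
        rw [hN]
      rw [hypDist, hypDist]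
      suffices h : ‖a-p‖ /
          Real.sqrt ((1 - (‖a‖)^2) * (1 - (‖p‖)^2))
          = ‖p-b‖ /
          Real.sqrt ((1 - (‖p‖)^2) * (1 - (‖b‖)^2)) by
        rw [h]
      rcases lt_or_ge 0 (1 - (‖p‖)^2) with hP | hP
      · have hX : 0 < (1 - (‖a‖)^2) * (1 - (‖p‖)^2) := mul_pos hA hP
        have hY : 0 < (1 - (‖p‖)^2) * (1 - (‖b‖)^2) := mul_pos hP hB
        have e1 : 0 ≤ ‖a-p‖ /
            Real.sqrt ((1 - (‖a‖)^2) * (1 - (‖p‖)^2)) := by positivity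
        have e2 : 0 ≤ ‖p-b‖ /
            Real.sqrt ((1 - (‖p‖)^2) * (1 - (‖b‖)^2)) := by positivity
        have hsq : (‖a-p‖ /
            Real.sqrt ((1 - (‖a‖)^2) * (1 - (‖p‖)^2)))^2
            = (‖p-b‖ /
            Real.sqrt ((1 - (‖p‖)^2) * (1 - (‖b‖)^2)))^2 := by
          rw [div_pow, div_pow, Real.sq_sqrt hX.le, Real.sq_sqrt hY.le,
            div_eq_div_iff hX.ne' hY.ne']
          linear_combination KEY
        calc ‖a-p‖ /
            Real.sqrt ((1 - (‖a‖)^2) * (1 - (‖p‖)^2))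
            = Real.sqrt ((‖a-p‖ /
              Real.sqrt ((1 - (‖a‖)^2) * (1 - (‖p‖)^2)))^2) :=
              (Real.sqrt_sq e1).symm
          _ = Real.sqrt ((‖p-b‖ /
              Real.sqrt ((1 - (‖p‖)^2) * (1 - (‖b‖)^2)))^2) := by rw [hsq]
          _ = ‖p-b‖ /
              Real.sqrt ((1 - (‖p‖)^2) * (1 - (‖b‖)^2)) :=
              Real.sqrt_sq e2
      · have h1 : (1 - (‖a‖)^2) * (1 - (‖p‖)^2) ≤ 0 := by nlinarith
        have h2 : (1 - (‖p‖)^2) * (1 - (‖b‖)^2) ≤ 0 := by nlinarith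
        rw [Real.sqrt_eq_zero'.2 h1, Real.sqrt_eq_zero'.2 h2, div_zero, div_zero]

lemma conj_unit {z : ℂ} (hz : ‖z‖ = 1) : (starRingEnd ℂ) z = z⁻¹ := by
  have hz0 : z ≠ 0 := by intro h; rw [h] at hz; simp at hz
  field_simp
  rw [mul_comm, Complex.mul_conj, Complex.normSq_eq_norm_sq, hz]
  norm_num


lemma expdiff (x y : ℝ) : Complex.exp (x * I) - Complex.exp (y * I)
    = 2 * I * (Real.sin ((x - y)/2) : ℝ) * Complex.exp ((((x + y)/2 : ℝ)) * I) := by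
  have h1 : (x:ℂ) * I = (((x-y)/2 : ℝ):ℂ) * I + (((x+y)/2 : ℝ):ℂ) * I := by push_cast; ring
  have h2 : (y:ℂ) * I = -((((x-y)/2 : ℝ):ℂ) * I) + (((x+y)/2 : ℝ):ℂ) * I := by push_cast; ring
  rw [h1, h2, Complex.exp_add, Complex.exp_add, Complex.ofReal_sin, Complex.sin]
  ring_nf
  rw [Complex.exp_neg]
  have := Complex.exp_ne_zero ((((x-y)/2 : ℝ):ℂ) * I)
  field_simp
  ring_nf
  rw [Complex.I_sq]
  ring

lemma expne (x y : ℝ) (h1 : x < y) (h2 : y < x + 2 * Real.pi) :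
    Complex.exp (x * I) ≠ Complex.exp (y * I) := by
  intro h
  obtain ⟨n, hn⟩ := Complex.exp_eq_exp_iff_exists_int.1 h
  have hn' : ((x - y - n * (2 * Real.pi) : ℝ) : ℂ) * I = 0 := by
    push_cast
    linear_combination hn
  rw [mul_eq_zero] at hn'
  rcases hn' with hn' | hn'
  · have h0 : (x - y - n * (2 * Real.pi) : ℝ) = 0 := by exact_mod_cast hn'
    have hpi := Real.pi_pos
    have hn0 : (-1 : ℝ) < n := by nlinarith
    have hn1 : (n : ℝ) < 0 := by nlinarith
    have h1' : (-1 : ℤ) < n := by exact_mod_cast hn0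
    have h2' : (n : ℤ) < 0 := by exact_mod_cast hn1
    omega
  · exact absurd hn' Complex.I_ne_zero

lemma quad (s1 s2 s3 s4 t : ℝ) (x1 x2 x3 x4 y : ℝ) (hx : x1 + x2 + (x3 + x4) = y + y)
    (ht : t ≠ 0) :
    (2 * I * (s1:ℂ) * Complex.exp ((x1:ℝ) * I)) * (2 * I * (s2:ℂ) * Complex.exp ((x2:ℝ) * I))
      * ((2 * I * (s3:ℂ) * Complex.exp ((x3:ℝ) * I)) * (2 * I * (s4:ℂ) * Complex.exp ((x4:ℝ) * I)))
      / (2 * I * (t:ℂ) * Complex.exp ((y:ℝ) * I))^2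
    = (((-4) * s1 * s2 * s3 * s4 / t^2 : ℝ) : ℂ) := by
  have hE : Complex.exp ((x1:ℝ) * I) * Complex.exp ((x2:ℝ) * I)
      * (Complex.exp ((x3:ℝ) * I) * Complex.exp ((x4:ℝ) * I))
      = Complex.exp ((y:ℝ) * I) * Complex.exp ((y:ℝ) * I) := by
    rw [← Complex.exp_add, ← Complex.exp_add, ← Complex.exp_add, ← Complex.exp_add]
    congr 1
    have := congrArg (fun r : ℝ => (r : ℂ) * I) hx
    push_cast at this ⊢
    linear_combination this
  have ht' : (t : ℂ) ≠ 0 := Complex.ofReal_ne_zero.2 ht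
  have hy := Complex.exp_ne_zero ((y:ℝ) * I)
  have hI := Complex.I_sq
  push_cast
  rw [div_eq_div_iff (pow_ne_zero _ (mul_ne_zero (mul_ne_zero (mul_ne_zero two_ne_zero
    Complex.I_ne_zero) ht') hy)) (pow_ne_zero _ ht')]
  linear_combination (16 * (s1:ℂ) * s2 * s3 * s4 * (t:ℂ)^2 * I^4) * hE
    + (16 * (s1:ℂ)*s2*s3*s4*(t:ℂ)^2 * Complex.exp ((y:ℝ)*I)^2 * I^2) * hI

lemma sinpos (x : ℝ) (h1 : 0 < x) (h2 : x < 2 * Real.pi) : 0 < Real.sin (x/2) :=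
  Real.sin_pos_of_pos_of_lt_pi (by linarith) (by linarith)

lemma sinneg (x : ℝ) (h1 : -(2 * Real.pi) < x) (h2 : x < 0) : Real.sin (x/2) < 0 := by
  have h3 : 0 < Real.sin (-x/2) := Real.sin_pos_of_pos_of_lt_pi (by linarith) (by linarith)
  rw [show x/2 = -(-x/2) by ring, Real.sin_neg]
  linarith


set_option maxHeartbeats 1000000 in
/-- Theorem 3.15 (2): with `u, c, d, v, w` in this cyclic order on the unit circle,
`L[u,v] ∥ L[c,d]` (i.e. `uv = cd`), `m = (c+d)/|c+d|`, `a = LIS[u,v,c,w]`,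
`b = LIS[u,v,d,w]`, `p = LIS[u,v,w,m]`, the point `p` is the Hilbert midpoint of `a` and
`b` and also their hyperbolic midpoint. -/
theorem stmt_14 (u c d v w : ℂ) (θ₁ θ₂ θ₃ θ₄ θ₅ : ℝ)
    (h12 : θ₁ < θ₂) (h23 : θ₂ < θ₃) (h34 : θ₃ < θ₄) (h45 : θ₄ < θ₅)
    (h51 : θ₅ < θ₁ + 2 * Real.pi)
    (hu : u = Complex.exp (θ₁ * Complex.I)) (hc : c = Complex.exp (θ₂ * Complex.I))
    (hd : d = Complex.exp (θ₃ * Complex.I)) (hv : v = Complex.exp (θ₄ * Complex.I))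
    (hw : w = Complex.exp (θ₅ * Complex.I))
    (hpar : u * v = c * d) (hcd : c + d ≠ 0) :
    let m : ℂ := (c + d) / ((‖c + d‖ : ℝ) : ℂ)
    let a : ℂ := (u * v * (c + w) - c * w * (u + v)) / (u * v - c * w)
    let b : ℂ := (u * v * (d + w) - d * w * (u + v)) / (u * v - d * w)
    let p : ℂ := (u * v * (w + m) - w * m * (u + v)) / (u * v - w * m)
    (‖u - p‖ * ‖a - v‖) /
        (‖u - a‖ * ‖p - v‖) =
      (‖u - b‖ * ‖p - v‖) /
        (‖u - p‖ * ‖b - v‖) ∧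
    hypDist a p = hypDist p b := by
  intro m a b p
  have hpi := Real.pi_pos
  -- unit moduli
  have hu1 : ‖u‖ = 1 := by rw [hu]; exact Complex.norm_exp_ofReal_mul_I θ₁
  have hv1 : ‖v‖ = 1 := by rw [hv]; exact Complex.norm_exp_ofReal_mul_I θ₄
  have hc1 : ‖c‖ = 1 := by rw [hc]; exact Complex.norm_exp_ofReal_mul_I θ₂
  have hd1 : ‖d‖ = 1 := by rw [hd]; exact Complex.norm_exp_ofReal_mul_I θ₃
  have hw1 : ‖w‖ = 1 := by rw [hw]; exact Complex.norm_exp_ofReal_mul_I θ₅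
  have hc0 : c ≠ 0 := by intro h; rw [h] at hc1; simp at hc1
  have hd0 : d ≠ 0 := by intro h; rw [h] at hd1; simp at hd1
  have habscd : (0:ℝ) < ‖c + d‖ := norm_pos_iff.2 hcd
  have hm1 : ‖m‖ = 1 := by
    show ‖(c + d) / ((‖c + d‖ : ℝ) : ℂ)‖ = 1
    rw [norm_div, Complex.norm_real, Real.norm_eq_abs, abs_of_pos habscd, div_self habscd.ne']
  -- m^2 = u v
  have hconjcd : (starRingEnd ℂ) (c + d) = (c + d)/(c * d) := by
    rw [map_add, conj_unit hc1, conj_unit hd1]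
    field_simp
    ring
  have habs2 : (((‖c + d‖) : ℝ) : ℂ)^2 = (c + d) * ((c + d)/(c * d)) := by
    have h1 : (((‖c + d‖) : ℝ) : ℂ)^2 = ((‖c+d‖^2 : ℝ) : ℂ) := by
      push_cast; ring
    rw [h1, Complex.sq_norm, ← hconjcd]
    exact (Complex.mul_conj (c+d)).symm
  have hm2 : m^2 = u * v := by
    show ((c + d) / ((‖c + d‖ : ℝ) : ℂ))^2 = u * v
    rw [div_pow, habs2, hpar]
    have hcd0 : (c:ℂ) * d ≠ 0 := mul_ne_zero hc0 hd0
    field_simp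
  -- angle sum relation
  have hpar' := hpar
  rw [hu, hv, hc, hd] at hpar'
  have hsum : θ₁ + θ₄ = θ₂ + θ₃ := by
    rw [← Complex.exp_add, ← Complex.exp_add] at hpar'
    obtain ⟨n, hn⟩ := Complex.exp_eq_exp_iff_exists_int.1 hpar'
    have hn' : ((θ₁ + θ₄ - (θ₂ + θ₃) - n * (2 * Real.pi) : ℝ) : ℂ) * I = 0 := by
      push_cast
      linear_combination hn
    rw [mul_eq_zero] at hn'
    rcases hn' with hn' | hn'
    · have h0 : (θ₁ + θ₄ - (θ₂ + θ₃) - n * (2 * Real.pi) : ℝ) = 0 := by exact_mod_cast hn'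
      have hn0 : (-1 : ℝ) < n := by nlinarith
      have hn1 : (n : ℝ) < 1 := by nlinarith
      have h1' : (-1 : ℤ) < n := by exact_mod_cast hn0
      have h2' : (n : ℤ) < 1 := by exact_mod_cast hn1
      have hz : n = 0 := by omega
      rw [hz] at h0
      push_cast at h0
      linarith
    · exact absurd hn' Complex.I_ne_zero
  -- distinctness
  have huv : u ≠ v := by rw [hu, hv]; exact expne θ₁ θ₄ (by linarith) (by linarith)
  have huc : u ≠ c := by rw [hu, hc]; exact expne θ₁ θ₂ h12 (by linarith)
  have hud : u ≠ d := by rw [hu, hd]; exact expne θ₁ θ₃ (by linarith) (by linarith)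
  have huw : u ≠ w := by rw [hu, hw]; exact expne θ₁ θ₅ (by linarith) (by linarith)
  have hvc : v ≠ c := by
    rw [hv, hc]; exact (expne θ₂ θ₄ (by linarith) (by linarith)).symm
  have hvd : v ≠ d := by
    rw [hv, hd]; exact (expne θ₃ θ₄ (by linarith) (by linarith)).symm
  have hvw : v ≠ w := by rw [hv, hw]; exact expne θ₄ θ₅ h45 (by linarith)
  have hcw : c ≠ w := by rw [hc, hw]; exact expne θ₂ θ₅ (by linarith) (by linarith)
  have hdw : d ≠ w := by rw [hd, hw]; exact expne θ₃ θ₅ (by linarith) (by linarith)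
  -- positivity of 1 - |a|^2 and 1 - |b|^2
  have hu0 : u ≠ 0 := by intro h; rw [h] at hu1; simp at hu1
  have hv0 : v ≠ 0 := by intro h; rw [h] at hv1; simp at hv1
  have hw0 : w ≠ 0 := by intro h; rw [h] at hw1; simp at hw1
  have hKc : u * v - c * w ≠ 0 := by
    intro h
    apply hdw
    have h2 : c * d = c * w := by rw [← hpar]; linear_combination h
    exact mul_left_cancel₀ hc0 h2
  have hKd : u * v - d * w ≠ 0 := by
    intro h
    apply hcw
    have h2 : d * c = d * w := by rw [mul_comm d c, ← hpar]; linear_combination h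
    exact mul_left_cancel₀ hd0 h2
  have huvE : u * v = Complex.exp (((θ₁ + θ₄ : ℝ) : ℂ) * I) := by
    rw [hu, hv, ← Complex.exp_add]; congr 1; push_cast; ring
  have hcwE : c * w = Complex.exp (((θ₂ + θ₅ : ℝ) : ℂ) * I) := by
    rw [hc, hw, ← Complex.exp_add]; congr 1; push_cast; ring
  have hdwE : d * w = Complex.exp (((θ₃ + θ₅ : ℝ) : ℂ) * I) := by
    rw [hd, hw, ← Complex.exp_add]; congr 1; push_cast; ring
  have ht1 : Real.sin ((θ₁ + θ₄ - (θ₂ + θ₅))/2) < 0 := by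
    have he : (θ₁ + θ₄ - (θ₂ + θ₅)) = θ₃ - θ₅ := by linarith
    rw [he]
    exact sinneg _ (by linarith) (by linarith)
  have ht2 : Real.sin ((θ₁ + θ₄ - (θ₃ + θ₅))/2) < 0 := by
    have he : (θ₁ + θ₄ - (θ₃ + θ₅)) = θ₂ - θ₅ := by linarith
    rw [he]
    exact sinneg _ (by linarith) (by linarith)
  have hs12 : Real.sin ((θ₁ - θ₂)/2) < 0 := sinneg _ (by linarith) (by linarith)
  have hs13 : Real.sin ((θ₁ - θ₃)/2) < 0 := sinneg _ (by linarith) (by linarith)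
  have hs15 : Real.sin ((θ₁ - θ₅)/2) < 0 := sinneg _ (by linarith) (by linarith)
  have hs42 : 0 < Real.sin ((θ₄ - θ₂)/2) := sinpos _ (by linarith) (by linarith)
  have hs43 : 0 < Real.sin ((θ₄ - θ₃)/2) := sinpos _ (by linarith) (by linarith)
  have hs45 : Real.sin ((θ₄ - θ₅)/2) < 0 := sinneg _ (by linarith) (by linarith)
  have hA : (0:ℝ) < 1 - (‖(u*v*(c+w) - c*w*(u+v)) / (u*v - c*w)‖)^2 := by
    have F := one_sub_sq u v c w hu0 hv0 hc0 hw0 (conj_unit hu1) (conj_unit hv1)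
      (conj_unit hc1) (conj_unit hw1) hKc
    have F2 : ((1 - (‖(u*v*(c+w) - c*w*(u+v)) / (u*v - c*w)‖)^2 : ℝ) : ℂ)
        = (((-4) * Real.sin ((θ₁ - θ₂)/2) * Real.sin ((θ₁ - θ₅)/2) * Real.sin ((θ₄ - θ₂)/2)
            * Real.sin ((θ₄ - θ₅)/2) / (Real.sin ((θ₁ + θ₄ - (θ₂ + θ₅))/2))^2 : ℝ) : ℂ) := by
      rw [F, huvE, hcwE, hu, hc, hv, hw,
        expdiff θ₁ θ₂, expdiff θ₁ θ₅, expdiff θ₄ θ₂, expdiff θ₄ θ₅,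
        expdiff (θ₁ + θ₄) (θ₂ + θ₅)]
      exact quad _ _ _ _ _ _ _ _ _ _ (by ring) ht1.ne
    have F3 : 1 - (‖(u*v*(c+w) - c*w*(u+v)) / (u*v - c*w)‖)^2
        = (-4) * Real.sin ((θ₁ - θ₂)/2) * Real.sin ((θ₁ - θ₅)/2) * Real.sin ((θ₄ - θ₂)/2)
            * Real.sin ((θ₄ - θ₅)/2) / (Real.sin ((θ₁ + θ₄ - (θ₂ + θ₅))/2))^2 := by
      exact_mod_cast F2
    rw [F3]
    have h1 : (0:ℝ) < (-(Real.sin ((θ₁ - θ₂)/2))) * (-(Real.sin ((θ₁ - θ₅)/2)))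
        * Real.sin ((θ₄ - θ₂)/2) * (-(Real.sin ((θ₄ - θ₅)/2))) := by
      apply mul_pos (mul_pos (mul_pos (by linarith) (by linarith)) hs42) (by linarith)
    have hnum : (0:ℝ) < (-4) * Real.sin ((θ₁ - θ₂)/2) * Real.sin ((θ₁ - θ₅)/2)
        * Real.sin ((θ₄ - θ₂)/2) * Real.sin ((θ₄ - θ₅)/2) := by nlinarith [h1]
    exact div_pos hnum (pow_two_pos_of_ne_zero ht1.ne)
  have hB : (0:ℝ) < 1 - (‖(u*v*(d+w) - d*w*(u+v)) / (u*v - d*w)‖)^2 := by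
    have F := one_sub_sq u v d w hu0 hv0 hd0 hw0 (conj_unit hu1) (conj_unit hv1)
      (conj_unit hd1) (conj_unit hw1) hKd
    have F2 : ((1 - (‖(u*v*(d+w) - d*w*(u+v)) / (u*v - d*w)‖)^2 : ℝ) : ℂ)
        = (((-4) * Real.sin ((θ₁ - θ₃)/2) * Real.sin ((θ₁ - θ₅)/2) * Real.sin ((θ₄ - θ₃)/2)
            * Real.sin ((θ₄ - θ₅)/2) / (Real.sin ((θ₁ + θ₄ - (θ₃ + θ₅))/2))^2 : ℝ) : ℂ) := by
      rw [F, huvE, hdwE, hu, hd, hv, hw,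
        expdiff θ₁ θ₃, expdiff θ₁ θ₅, expdiff θ₄ θ₃, expdiff θ₄ θ₅,
        expdiff (θ₁ + θ₄) (θ₃ + θ₅)]
      exact quad _ _ _ _ _ _ _ _ _ _ (by ring) ht2.ne
    have F3 : 1 - (‖(u*v*(d+w) - d*w*(u+v)) / (u*v - d*w)‖)^2
        = (-4) * Real.sin ((θ₁ - θ₃)/2) * Real.sin ((θ₁ - θ₅)/2) * Real.sin ((θ₄ - θ₃)/2)
            * Real.sin ((θ₄ - θ₅)/2) / (Real.sin ((θ₁ + θ₄ - (θ₃ + θ₅))/2))^2 := by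
      exact_mod_cast F2
    rw [F3]
    have h1 : (0:ℝ) < (-(Real.sin ((θ₁ - θ₃)/2))) * (-(Real.sin ((θ₁ - θ₅)/2)))
        * Real.sin ((θ₄ - θ₃)/2) * (-(Real.sin ((θ₄ - θ₅)/2))) := by
      apply mul_pos (mul_pos (mul_pos (by linarith) (by linarith)) hs43) (by linarith)
    have hnum : (0:ℝ) < (-4) * Real.sin ((θ₁ - θ₃)/2) * Real.sin ((θ₁ - θ₅)/2)
        * Real.sin ((θ₄ - θ₃)/2) * Real.sin ((θ₄ - θ₅)/2) := by nlinarith [h1]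
    exact div_pos hnum (pow_two_pos_of_ne_zero ht2.ne)
  exact core u v c d w m hu1 hv1 hc1 hd1 hw1 hm1 hpar hm2 huv huc hud huw hvc hvd hvw hcw hdw hA hB
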